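/- The quotient ring Z[x1,x2,x3]/(2*x1 + 4*x3, 3*x2 + 2*x3) is isomorphic as a ring to Z[s,t]/(2*t). -/
import Mathlib

open MvPolynomial

noncomputable section AuxStmt2

private def I3 : Ideal (MvPolynomial (Fin 3) ℤ) :=
  Ideal.span {2 * X 0 + 4 * X 2, 3 * X 1 + 2 * X 2}

private def I2 : Ideal (MvPolynomial (Fin 2) ℤ) :=
  Ideal.span {2 * X 1}

private def φ : MvPolynomial (Fin 3) ℤ →+* MvPolynomial (Fin 2) ℤ :=
  eval₂Hom C ![X 1 - 6 * X 0, -2 * X 0, 3 * X 0]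

private def ψ : MvPolynomial (Fin 2) ℤ →+* MvPolynomial (Fin 3) ℤ :=
  eval₂Hom C ![X 1 + X 2, X 0 + 6 * X 1 + 6 * X 2]

private lemma phi0 : φ (X 0) = X 1 - 6 * X 0 := by simp [φ]
private lemma phi1 : φ (X 1) = -2 * X 0 := by simp [φ]
private lemma phi2 : φ (X 2) = 3 * X 0 := by simp [φ]
private lemma phiC (r : ℤ) : φ (C r) = C r := by simp [φ]
private lemma psi0 : ψ (X 0) = X 1 + X 2 := by simp [ψ]
private lemma psi1 : ψ (X 1) = X 0 + 6 * X 1 + 6 * X 2 := by simp [ψ]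
private lemma psiC (r : ℤ) : ψ (C r) = C r := by simp [ψ]

private lemma phipsi0 : φ (ψ (X 0)) = X 0 := by
  rw [psi0, map_add, phi1, phi2]; ring
private lemma phipsi1 : φ (ψ (X 1)) = X 1 := by
  rw [psi1, map_add, map_add, map_mul, map_mul, phi0, phi1, phi2, map_ofNat φ 6]; ring
private lemma psiphi0 : ψ (φ (X 0)) = X 0 := by
  rw [phi0, map_sub, map_mul, psi0, psi1, map_ofNat ψ 6]; ring
private lemma psiphi1 : ψ (φ (X 1)) - X 1 = -(3 * X 1 + 2 * X 2) := by
  rw [phi1, map_mul, psi0, show ψ (-2) = -2 by rw [map_neg, map_ofNat ψ 2]]; ring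
private lemma psiphi2 : ψ (φ (X 2)) - X 2 = 3 * X 1 + 2 * X 2 := by
  rw [phi2, map_mul, psi0, map_ofNat ψ 3]; ring

private lemma hF : ∀ a ∈ I3, ((Ideal.Quotient.mk I2).comp φ) a = 0 := by
  intro a ha
  have h : I3 ≤ RingHom.ker ((Ideal.Quotient.mk I2).comp φ) := by
    rw [I3, Ideal.span_le]
    rintro a (rfl | rfl) <;> simp only [SetLike.mem_coe, RingHom.mem_ker, RingHom.comp_apply]
    · have e : φ (2 * X 0 + 4 * X 2) = 2 * X 1 := by
        rw [map_add, map_mul, map_mul, phi0, phi2, map_ofNat φ 2, map_ofNat φ 4]; ring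
      rw [e, Ideal.Quotient.eq_zero_iff_mem]
      exact Ideal.subset_span rfl
    · have e : φ (3 * X 1 + 2 * X 2) = 0 := by
        rw [map_add, map_mul, map_mul, phi1, phi2, map_ofNat φ 2, map_ofNat φ 3]; ring
      rw [e, map_zero]
  exact h ha

private lemma hG : ∀ a ∈ I2, ((Ideal.Quotient.mk I3).comp ψ) a = 0 := by
  intro a ha
  have h : I2 ≤ RingHom.ker ((Ideal.Quotient.mk I3).comp ψ) := by
    rw [I2, Ideal.span_le]
    rintro a rfl
    simp only [SetLike.mem_coe, RingHom.mem_ker, RingHom.comp_apply]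
    have e : ψ (2 * X 1) = (2 * X 0 + 4 * X 2) + 4 * (3 * X 1 + 2 * X 2) := by
      rw [map_mul, psi1, map_ofNat ψ 2]; ring
    rw [e, Ideal.Quotient.eq_zero_iff_mem]
    exact add_mem (Ideal.subset_span (by simp [I3]))
      (Ideal.mul_mem_left _ _ (Ideal.subset_span (by simp [I3])))
  exact h ha

end AuxStmt2

/-- ℤ[x₁,x₂,x₃]/(2x₁+4x₃, 3x₂+2x₃) ≅ ℤ[s,t]/(2t). -/
theorem stmt_2 :
    Nonempty
      ((MvPolynomial (Fin 3) ℤ ⧸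
          Ideal.span ({2 * X 0 + 4 * X 2, 3 * X 1 + 2 * X 2} :
            Set (MvPolynomial (Fin 3) ℤ)))
        ≃+*
       (MvPolynomial (Fin 2) ℤ ⧸
          Ideal.span ({2 * X 1} : Set (MvPolynomial (Fin 2) ℤ)))) := by
  let F := Ideal.Quotient.lift I3 ((Ideal.Quotient.mk I2).comp φ) hF
  let G := Ideal.Quotient.lift I2 ((Ideal.Quotient.mk I3).comp ψ) hG
  have h1 : F.comp G = RingHom.id _ := by
    refine Ideal.Quotient.ringHom_ext (MvPolynomial.ringHom_ext (fun r => ?_) (fun i => ?_))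
    · simp only [RingHom.comp_apply, RingHom.id_apply, F, G, Ideal.Quotient.lift_mk,
        phiC, psiC]
    · fin_cases i <;>
        simp only [RingHom.comp_apply, RingHom.id_apply, F, G, Ideal.Quotient.lift_mk]
      · show Ideal.Quotient.mk I2 (φ (ψ (X 0))) = Ideal.Quotient.mk I2 (X 0)
        rw [phipsi0]
      · show Ideal.Quotient.mk I2 (φ (ψ (X 1))) = Ideal.Quotient.mk I2 (X 1)
        rw [phipsi1]
  have h2 : G.comp F = RingHom.id _ := by
    refine Ideal.Quotient.ringHom_ext (MvPolynomial.ringHom_ext (fun r => ?_) (fun i => ?_))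
    · simp only [RingHom.comp_apply, RingHom.id_apply, F, G, Ideal.Quotient.lift_mk,
        phiC, psiC]
    · fin_cases i <;>
        simp only [RingHom.comp_apply, RingHom.id_apply, F, G, Ideal.Quotient.lift_mk]
      · show Ideal.Quotient.mk I3 (ψ (φ (X 0))) = Ideal.Quotient.mk I3 (X 0)
        rw [psiphi0]
      · show Ideal.Quotient.mk I3 (ψ (φ (X 1))) = Ideal.Quotient.mk I3 (X 1)
        rw [Ideal.Quotient.eq, psiphi1]
        exact neg_mem (Ideal.subset_span (by simp [I3]))
      · show Ideal.Quotient.mk I3 (ψ (φ (X 2))) = Ideal.Quotient.mk I3 (X 2)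
        rw [Ideal.Quotient.eq, psiphi2]
        exact Ideal.subset_span (by simp [I3])
  exact ⟨RingEquiv.ofRingHom F G h1 h2⟩
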